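/- Let (g_n) be a sequence in SL(2,ℝ) with ‖g_n‖ → ∞, where ‖g‖ = (a²+b²+c²+d²)^{1/2}. Then there exists a subsequence (g_{n_p}) such that κ_{g_{n_p}} → ∞ almost uniformly with respect to λ as p → ∞: for every ε > 0 there is a measurable set S ⊆ ℝ with λ(ℝ \ S) ≤ ε such that for every M > 0 there is P with κ_{g_{n_p}}(ρ) ≥ M for all p ≥ P and all ρ ∈ S. -/

import Mathlib

open MeasureTheory Matrix

noncomputable section

/-- `SL(2,ℝ)`, the group of real 2×2 matrices of determinant 1. -/
abbrev SL2 := Matrix.SpecialLinearGroup (Fin 2) ℝ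

/-- The Cauchy probability measure on `ℝ`, with density `ρ ↦ 1/(π(1+ρ²))` with
respect to Lebesgue measure. -/
def cauchyM : Measure ℝ :=
  volume.withDensity fun ρ => ENNReal.ofReal (1 / (Real.pi * (1 + ρ ^ 2)))

/-- The Möbius right action `ρ·g = (aρ+c)/(bρ+d)` of `g = [[a,b],[c,d]] ∈ SL(2,ℝ)`
on `ℝ` (here `a = g 0 0`, `b = g 0 1`, `c = g 1 0`, `d = g 1 1`). -/
def mob (g : SL2) (ρ : ℝ) : ℝ :=
  (g.1 0 0 * ρ + g.1 1 0) / (g.1 0 1 * ρ + g.1 1 1)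

/-- The factor `κ_g(ρ) = ((aρ+c)² + (bρ+d)²)/(ρ²+1)`. -/
def kappa (g : SL2) (ρ : ℝ) : ℝ :=
  ((g.1 0 0 * ρ + g.1 1 0) ^ 2 + (g.1 0 1 * ρ + g.1 1 1) ^ 2) / (ρ ^ 2 + 1)


/-- The norm `‖g‖ = (a² + b² + c² + d²)^{1/2}` on `SL(2,ℝ)`. -/
def gnorm (g : SL2) : ℝ :=
  Real.sqrt ((g.1 0 0) ^ 2 + (g.1 0 1) ^ 2 + (g.1 1 0) ^ 2 + (g.1 1 1) ^ 2)

/-- unit vector in the direction of the bigger column of g -/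
def wvec (g : SL2) : ℝ × ℝ :=
  if (g.1 0 1)^2 + (g.1 1 1)^2 ≤ (g.1 0 0)^2 + (g.1 1 0)^2 then
    (g.1 0 0 / Real.sqrt ((g.1 0 0)^2 + (g.1 1 0)^2),
     g.1 1 0 / Real.sqrt ((g.1 0 0)^2 + (g.1 1 0)^2))
  else
    (g.1 0 1 / Real.sqrt ((g.1 0 1)^2 + (g.1 1 1)^2),
     g.1 1 1 / Real.sqrt ((g.1 0 1)^2 + (g.1 1 1)^2))

lemma det_eq (g : SL2) : g.1 0 0 * g.1 1 1 - g.1 0 1 * g.1 1 0 = 1 := by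
  have := g.2
  rwa [Matrix.det_fin_two] at this

lemma wvec_unit (g : SL2) : (wvec g).1 ^ 2 + (wvec g).2 ^ 2 = 1 := by
  set a := g.1 0 0; set b := g.1 0 1; set c := g.1 1 0; set d := g.1 1 1
  have hdet : a * d - b * c = 1 := det_eq g
  have hcs : 1 ≤ (a^2 + c^2) * (b^2 + d^2) := by nlinarith [sq_nonneg (a*b + c*d)]
  rw [wvec]
  split_ifs with h
  · have h1 : (0:ℝ) < a^2 + c^2 := by nlinarith [sq_nonneg (b^2+d^2)]
    have hL : Real.sqrt (a^2 + c^2) ^ 2 = a^2 + c^2 := Real.sq_sqrt h1.le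
    have hLpos : 0 < Real.sqrt (a^2+c^2) := Real.sqrt_pos.2 h1
    field_simp
    exact (div_eq_one_iff_eq (pow_pos hLpos 2).ne').2 hL.symm
  · push_neg at h
    have h1 : (0:ℝ) < b^2 + d^2 := by nlinarith [sq_nonneg (a^2+c^2)]
    have hL : Real.sqrt (b^2 + d^2) ^ 2 = b^2 + d^2 := Real.sq_sqrt h1.le
    have hLpos : 0 < Real.sqrt (b^2+d^2) := Real.sqrt_pos.2 h1
    field_simp
    exact (div_eq_one_iff_eq (pow_pos hLpos 2).ne').2 hL.symm

lemma kappa_key (g : SL2) (ρ : ℝ) :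
    (gnorm g)^2/2 * (((wvec g).1 * ρ + (wvec g).2)^2 / (ρ^2+1)) ≤ kappa g ρ := by
  set a := g.1 0 0; set b := g.1 0 1; set c := g.1 1 0; set d := g.1 1 1
  have hdet : a * d - b * c = 1 := det_eq g
  have hcs : 1 ≤ (a^2 + c^2) * (b^2 + d^2) := by nlinarith [sq_nonneg (a*b + c*d)]
  have hN : (gnorm g)^2 = a^2 + b^2 + c^2 + d^2 := Real.sq_sqrt (by positivity)
  have ht : (0:ℝ) < ρ^2 + 1 := by positivity
  rw [kappa, wvec]
  split_ifs with h
  · have h1 : (0:ℝ) < a^2 + c^2 := by nlinarith [sq_nonneg (b^2+d^2)]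
    have hL : Real.sqrt (a^2 + c^2) ^ 2 = a^2 + c^2 := Real.sq_sqrt h1.le
    have hLpos : 0 < Real.sqrt (a^2+c^2) := Real.sqrt_pos.2 h1
    set L := Real.sqrt (a^2+c^2) with hLdef
    have key : (gnorm g)^2/2 * ((a/L * ρ + c/L)^2) ≤ (a*ρ+c)^2 := by
      have e1 : (a/L * ρ + c/L)^2 = (a*ρ+c)^2 / L^2 := by
        field_simp
      have h' : b^2 + d^2 ≤ a^2 + c^2 := h
      rw [e1, hN, hL]
      rw [mul_comm, div_mul_div_comm, div_le_iff₀ (by positivity)]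
      nlinarith [sq_nonneg (a*ρ+c), h']
    calc (gnorm g)^2/2 * ((a/L * ρ + c/L)^2 / (ρ^2+1))
        = ((gnorm g)^2/2 * (a/L * ρ + c/L)^2) / (ρ^2+1) := by ring
      _ ≤ ((a*ρ+c)^2 + (b*ρ+d)^2) / (ρ^2+1) := by
          gcongr
          nlinarith [sq_nonneg (b*ρ+d)]
  · push_neg at h
    have h1 : (0:ℝ) < b^2 + d^2 := by nlinarith [sq_nonneg (a^2+c^2)]
    have hL : Real.sqrt (b^2 + d^2) ^ 2 = b^2 + d^2 := Real.sq_sqrt h1.le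
    have hLpos : 0 < Real.sqrt (b^2+d^2) := Real.sqrt_pos.2 h1
    set L := Real.sqrt (b^2+d^2) with hLdef
    have key : (gnorm g)^2/2 * ((b/L * ρ + d/L)^2) ≤ (b*ρ+d)^2 := by
      have e1 : (b/L * ρ + d/L)^2 = (b*ρ+d)^2 / L^2 := by
        field_simp
      have h' : a^2 + c^2 ≤ b^2 + d^2 := h.le
      rw [e1, hN, hL]
      rw [mul_comm, div_mul_div_comm, div_le_iff₀ (by positivity)]
      nlinarith [sq_nonneg (b*ρ+d), h']
    calc (gnorm g)^2/2 * ((b/L * ρ + d/L)^2 / (ρ^2+1))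
        = ((gnorm g)^2/2 * (b/L * ρ + d/L)^2) / (ρ^2+1) := by ring
      _ ≤ ((a*ρ+c)^2 + (b*ρ+d)^2) / (ρ^2+1) := by
          gcongr
          nlinarith [sq_nonneg (a*ρ+c)]

/-- perturbation lemma -/
lemma perturb (δ ρ u₁ u₂ w₁ w₂ : ℝ) (hδ : 0 < δ)
    (h1 : δ * (ρ^2+1) < (u₁*ρ+u₂)^2)
    (h2 : (w₁-u₁)^2 + (w₂-u₂)^2 ≤ δ/4) :
    δ/4 * (ρ^2+1) ≤ (w₁*ρ+w₂)^2 := by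
  have ht : (0:ℝ) ≤ ρ^2+1 := by positivity
  have hcs : ((w₁-u₁)*ρ + (w₂-u₂))^2 ≤ ((w₁-u₁)^2 + (w₂-u₂)^2) * (ρ^2+1) := by
    nlinarith [sq_nonneg ((w₁-u₁) - (w₂-u₂)*ρ)]
  have he2 : ((w₁-u₁)*ρ + (w₂-u₂))^2 ≤ δ/4 * (ρ^2+1) := by
    nlinarith [mul_nonneg (sub_nonneg.2 h2) ht]
  nlinarith [sq_nonneg ((u₁*ρ+u₂) + 2*((w₁-u₁)*ρ+(w₂-u₂))), he2, h1]

instance cauchyM_finite : IsFiniteMeasure cauchyM := by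
  constructor
  rw [cauchyM, withDensity_apply _ MeasurableSet.univ, Measure.restrict_univ]
  have hb : ∀ ρ : ℝ, ENNReal.ofReal (1/(Real.pi*(1+ρ^2))) ≤ ENNReal.ofReal ((1+ρ^2)⁻¹) := by
    intro ρ
    apply ENNReal.ofReal_le_ofReal
    rw [one_div]
    have h1 : (0:ℝ) < 1 + ρ^2 := by positivity
    have h2 : (1:ℝ) + ρ^2 ≤ Real.pi * (1+ρ^2) := by
      nlinarith [Real.pi_gt_three]
    exact inv_anti₀ h1 h2
  calc ∫⁻ ρ, ENNReal.ofReal (1/(Real.pi*(1+ρ^2))) ∂volume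
      ≤ ∫⁻ ρ, ENNReal.ofReal ((1+ρ^2)⁻¹) ∂volume := lintegral_mono hb
    _ < ⊤ := integrable_inv_one_add_sq.lintegral_lt_top

lemma cauchyM_null {E : Set ℝ} (hE : volume E = 0) : cauchyM E = 0 :=
  (withDensity_absolutelyContinuous _ _) hE

lemma small_bad (u₁ u₂ : ℝ) (hu : u₁^2 + u₂^2 = 1) (ε : ℝ) (hε : 0 < ε) :
    ∃ δ : ℝ, 0 < δ ∧ cauchyM {ρ | (u₁*ρ+u₂)^2 ≤ δ*(ρ^2+1)} ≤ ENNReal.ofReal ε := by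
  set A : ℕ → Set ℝ := fun k => {ρ | (u₁*ρ+u₂)^2 ≤ (1/(k+1))*(ρ^2+1)} with hA
  have hmeas : ∀ k, MeasurableSet (A k) := by
    intro k
    exact measurableSet_le (by fun_prop) (by fun_prop)
  have hanti : Antitone A := by
    intro m n hmn ρ hρ
    simp only [hA, Set.mem_setOf_eq] at *
    refine hρ.trans ?_
    have h1 : (0:ℝ) < (m:ℝ)+1 := by positivity
    have h2 : ((m:ℝ)+1) ≤ (n:ℝ)+1 := by exact_mod_cast by omega
    gcongr
  have hint : (⋂ k, A k) ⊆ {ρ | u₁*ρ+u₂ = 0} := by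
    intro ρ hρ
    simp only [Set.mem_iInter, hA, Set.mem_setOf_eq] at hρ ⊢
    by_contra hne
    have hpos : 0 < (u₁*ρ+u₂)^2 := by positivity
    obtain ⟨k, hk⟩ := exists_nat_gt ((ρ^2+1)/(u₁*ρ+u₂)^2)
    have := hρ k
    rw [div_lt_iff₀ hpos] at hk
    have hk1 : (0:ℝ) < (k:ℝ)+1 := by positivity
    rw [one_div, inv_mul_eq_div, le_div_iff₀ hk1] at this
    nlinarith
  have hnull : cauchyM {ρ | u₁*ρ+u₂ = 0} = 0 := by
    by_cases h : u₁ = 0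
    · have hu₂ : u₂ ≠ 0 := by
        intro h2; rw [h, h2] at hu; norm_num at hu
      have : {ρ : ℝ | u₁*ρ+u₂ = 0} = ∅ := by
        ext ρ; simp [h, hu₂]
      rw [this]; simp
    · have : {ρ : ℝ | u₁*ρ+u₂ = 0} = {-u₂/u₁} := by
        ext ρ
        simp only [Set.mem_setOf_eq, Set.mem_singleton_iff]
        constructor
        · intro h2; field_simp; linarith
        · intro h2; rw [h2]; field_simp; ring
      rw [this]
      exact cauchyM_null Real.volume_singleton
  have h0 : cauchyM (⋂ k, A k) = 0 := measure_mono_null hint hnull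
  have htend := tendsto_measure_iInter_atTop (μ := cauchyM) (fun k => (hmeas k).nullMeasurableSet)
    hanti ⟨0, measure_ne_top _ _⟩
  rw [h0] at htend
  have hev : ∀ᶠ k in Filter.atTop, cauchyM (A k) < ENNReal.ofReal ε :=
    htend.eventually_lt_const (ENNReal.ofReal_pos.2 hε)
  obtain ⟨k, hk⟩ := hev.exists
  exact ⟨1/(k+1), by positivity, hk.le⟩

/-- If `‖g_n‖ → ∞` in `SL(2,ℝ)`, then some subsequence `(g_{n_p})` satisfies
`κ_{g_{n_p}} → ∞` almost uniformly with respect to the Cauchy measure `λ`: for every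
`ε > 0` there is a measurable set `S` with `λ(ℝ \ S) ≤ ε` such that for every `M > 0`,
eventually in `p`, `κ_{g_{n_p}}(ρ) ≥ M` for all `ρ ∈ S`. -/
theorem kappa_tendsto_infty_almost_uniformly
    (g : ℕ → SL2) (hg : Filter.Tendsto (fun n => gnorm (g n)) Filter.atTop Filter.atTop) :
    ∃ φ : ℕ → ℕ, StrictMono φ ∧
      ∀ ε > (0 : ℝ), ∃ S : Set ℝ, MeasurableSet S ∧ cauchyM Sᶜ ≤ ENNReal.ofReal ε ∧
        ∀ M > (0 : ℝ), ∃ P : ℕ, ∀ p ≥ P, ∀ ρ ∈ S, M ≤ kappa (g (φ p)) ρ := by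
  classical
  set K : Set (ℝ × ℝ) := {x | x.1^2 + x.2^2 = 1} with hK
  have hKcomp : IsCompact K := by
    apply Metric.isCompact_of_isClosed_isBounded
    · exact isClosed_eq (by fun_prop) continuous_const
    · apply (Metric.isBounded_closedBall (x := (0:ℝ×ℝ)) (r := 1)).subset
      intro x hx
      simp only [hK, Set.mem_setOf_eq] at hx
      rw [Metric.mem_closedBall, dist_zero_right, Prod.norm_def]
      have h1 : |x.1| ≤ 1 := by
        rw [abs_le]; constructor <;> nlinarith [sq_nonneg x.2]
      have h2 : |x.2| ≤ 1 := by
        rw [abs_le]; constructor <;> nlinarith [sq_nonneg x.1]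
      simp only [Real.norm_eq_abs]
      exact max_le h1 h2
  have hmem : ∀ n, wvec (g n) ∈ K := fun n => wvec_unit (g n)
  obtain ⟨u, huK, φ, hφ, hconv⟩ := hKcomp.tendsto_subseq hmem
  refine ⟨φ, hφ, ?_⟩
  intro ε hε
  obtain ⟨δ, hδ, hbound⟩ := small_bad u.1 u.2 huK ε hε
  refine ⟨{ρ | δ*(ρ^2+1) < (u.1*ρ+u.2)^2}, measurableSet_lt (by fun_prop) (by fun_prop), ?_, ?_⟩
  · have hc : {ρ : ℝ | δ*(ρ^2+1) < (u.1*ρ+u.2)^2}ᶜ = {ρ | (u.1*ρ+u.2)^2 ≤ δ*(ρ^2+1)} := by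
      ext ρ; simp [not_lt]
    rw [hc]; exact hbound
  · intro M hM
    have h1 : Filter.Tendsto (fun p => (wvec (g (φ p))).1) Filter.atTop (nhds u.1) :=
      (continuous_fst.tendsto u).comp hconv
    have h2 : Filter.Tendsto (fun p => (wvec (g (φ p))).2) Filter.atTop (nhds u.2) :=
      (continuous_snd.tendsto u).comp hconv
    have hd : Filter.Tendsto
        (fun p => ((wvec (g (φ p))).1 - u.1)^2 + ((wvec (g (φ p))).2 - u.2)^2)
        Filter.atTop (nhds 0) := by
      have hd' : Filter.Tendsto
          (fun p => ((wvec (g (φ p))).1 - u.1)^2 + ((wvec (g (φ p))).2 - u.2)^2)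
          Filter.atTop (nhds ((u.1 - u.1)^2 + (u.2 - u.2)^2)) :=
        ((h1.sub (tendsto_const_nhds (x := u.1))).pow 2).add
          ((h2.sub (tendsto_const_nhds (x := u.2))).pow 2)
      simpa using hd'
    have hev1 : ∀ᶠ p in Filter.atTop,
        ((wvec (g (φ p))).1 - u.1)^2 + ((wvec (g (φ p))).2 - u.2)^2 ≤ δ/4 :=
      hd.eventually_le_const (by positivity)
    have hgn : Filter.Tendsto (fun p => gnorm (g (φ p))) Filter.atTop Filter.atTop :=
      hg.comp hφ.tendsto_atTop
    have hev2 : ∀ᶠ p in Filter.atTop, Real.sqrt (8*M/δ) ≤ gnorm (g (φ p)) :=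
      hgn.eventually_ge_atTop _
    obtain ⟨P, hP⟩ := Filter.eventually_atTop.1 (hev1.and hev2)
    refine ⟨P, fun p hp ρ hρ => ?_⟩
    obtain ⟨hw, hN⟩ := hP p hp
    have hρ' : δ * (ρ^2+1) < (u.1*ρ+u.2)^2 := hρ
    have hpert := perturb δ ρ u.1 u.2 (wvec (g (φ p))).1 (wvec (g (φ p))).2 hδ hρ' hw
    have hNsq : 8*M/δ ≤ (gnorm (g (φ p)))^2 := by
      nlinarith [Real.sq_sqrt (show (0:ℝ) ≤ 8*M/δ by positivity),
        Real.sqrt_nonneg (8*M/δ), hN]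
    have ht : (0:ℝ) < ρ^2+1 := by positivity
    have hfrac : δ/4 ≤ ((wvec (g (φ p))).1*ρ + (wvec (g (φ p))).2)^2/(ρ^2+1) :=
      (le_div_iff₀ ht).2 (by linarith [hpert])
    calc M = (8*M/δ)/2 * (δ/4) := by field_simp; ring
      _ ≤ (gnorm (g (φ p)))^2/2 * (((wvec (g (φ p))).1*ρ + (wvec (g (φ p))).2)^2/(ρ^2+1)) := by
          apply mul_le_mul (by linarith) hfrac (by positivity) (by positivity)
      _ ≤ kappa (g (φ p)) ρ := kappa_key _ _
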